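/- arXiv:2605.30496 — 2 statements merged into one kernel-verified Lean document; each statement's English description precedes it below -/
import Mathlib

section
/- Let n be a positive integer and let p(y) = (H_{n+1} - H_y)/(n+1) for y = 0, 1, ..., n, where H_m is the m-th harmonic number. Then the variance of this distribution is Σ_{y=0}^{n} y² · p(y) - (n/4)² = 7n²/144 + 5n/36. -/
/-- `H m` is the `m`-th harmonic number, with `H 0 = 0`. -/
noncomputable def H (m : ℕ) : ℝ := ∑ j ∈ Finset.range m, 1 / ((j : ℝ) + 1)

lemma H_succ (m : ℕ) : H (m + 1) = H m + 1 / ((m : ℝ) + 1) := by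
  simp [H, Finset.sum_range_succ]

lemma sq_sum (n : ℕ) :
    ∑ y ∈ Finset.range (n + 1), (y : ℝ) ^ 2 = n * (n + 1) * (2 * n + 1) / 6 := by
  induction n with
  | zero => simp
  | succ k ih =>
      rw [Finset.sum_range_succ, ih]
      push_cast
      ring

lemma key (n : ℕ) :
    ∑ y ∈ Finset.range (n + 1), (y : ℝ) ^ 2 * (H (n + 1) - H y)
      = n * (n + 1) * (4 * n + 5) / 36 := by
  induction n with
  | zero => simp
  | succ k ih =>
      rw [Finset.sum_range_succ]
      have h1 : ∀ y : ℕ, (y : ℝ) ^ 2 * (H (k + 1 + 1) - H y)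
          = (y : ℝ) ^ 2 * (H (k + 1) - H y) + (y : ℝ) ^ 2 * (1 / ((k : ℝ) + 1 + 1)) := by
        intro y
        rw [H_succ (k + 1)]
        push_cast
        ring
      have h2 : ∑ y ∈ Finset.range (k + 1), (y : ℝ) ^ 2 * (H (k + 1 + 1) - H y)
          = (k : ℝ) * (k + 1) * (4 * k + 5) / 36
            + (k * (k + 1) * (2 * k + 1) / 6) * (1 / ((k : ℝ) + 1 + 1)) := by
        simp only [h1, Finset.sum_add_distrib, ih, ← Finset.sum_mul, sq_sum]
      rw [h2, H_succ (k + 1)]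
      have hk : ((k : ℝ) + 1 + 1) ≠ 0 := by positivity
      push_cast
      field_simp
      ring

theorem marginal_variance (n : ℕ) (hn : 0 < n) :
    ∑ y ∈ Finset.range (n + 1),
          (y : ℝ) ^ 2 * ((H (n + 1) - H y) / ((n : ℝ) + 1)) - ((n : ℝ) / 4) ^ 2
      = 7 * (n : ℝ) ^ 2 / 144 + 5 * (n : ℝ) / 36 := by
  have h : ∑ y ∈ Finset.range (n + 1),
        (y : ℝ) ^ 2 * ((H (n + 1) - H y) / ((n : ℝ) + 1))
      = (∑ y ∈ Finset.range (n + 1), (y : ℝ) ^ 2 * (H (n + 1) - H y)) / ((n : ℝ) + 1) := by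
    rw [Finset.sum_div]
    exact Finset.sum_congr rfl fun y _ => by ring
  rw [h, key]
  have hn1 : ((n : ℝ) + 1) ≠ 0 := by positivity
  field_simp
  ring
end

section
/- Fix α ∈ (0,1). With p_n(y) = (H_{n+1} - H_y)/(n+1) denoting the marginal probability mass function of Y for sample size n, one has lim_{n→∞} n · p_n(⌊αn⌋) = -ln(α). -/
open Filter Real Topology

lemma H_eq_harmonic (m : ℕ) : H m = (harmonic m : ℝ) := by
  simp [H, harmonic, one_div]

theorem normalization_constant_limit (a : ℝ) (ha : a ∈ Set.Ioo (0:ℝ) 1) :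
    Filter.Tendsto
      (fun n : ℕ => (n : ℝ) * ((H (n + 1) - H ⌊a * n⌋₊) / ((n : ℝ) + 1)))
      Filter.atTop (nhds (-Real.log a)) := by
  obtain ⟨ha0, ha1⟩ := ha
  have hfloor : Tendsto (fun n : ℕ => ⌊a * n⌋₊) atTop atTop :=
    tendsto_nat_floor_mul_atTop a ha0
  have t1 : Tendsto (fun n : ℕ => (harmonic (n + 1) : ℝ) - Real.log (n + 1)) atTop
      (𝓝 eulerMascheroniConstant) := by
    have := Real.tendsto_harmonic_sub_log.comp (tendsto_add_atTop_nat 1)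
    simpa only [Function.comp_def, Nat.cast_add, Nat.cast_one] using this
  have t2 : Tendsto (fun n : ℕ => (harmonic ⌊a * n⌋₊ : ℝ) - Real.log ⌊a * n⌋₊) atTop
      (𝓝 eulerMascheroniConstant) := Real.tendsto_harmonic_sub_log.comp hfloor
  have t3 : Tendsto (fun n : ℕ => Real.log (n + 1) - Real.log n) atTop (𝓝 0) :=
    Real.tendsto_log_nat_add_one_sub_log
  have t4 : Tendsto (fun n : ℕ => Real.log ((⌊a * n⌋₊ : ℝ) / n)) atTop (𝓝 (Real.log a)) := by
    have h4 : Tendsto (fun n : ℕ => (⌊a * n⌋₊ : ℝ) / n) atTop (𝓝 a) :=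
      (tendsto_nat_floor_mul_div_atTop ha0.le).comp tendsto_natCast_atTop_atTop
    exact (Real.continuousAt_log ha0.ne').tendsto.comp h4
  have tratio : Tendsto (fun n : ℕ => (n : ℝ) / ((n : ℝ) + 1)) atTop (𝓝 1) :=
    tendsto_natCast_div_add_atTop (1 : ℝ)
  have key : Tendsto (fun n : ℕ =>
      ((n : ℝ) / ((n : ℝ) + 1)) *
        ((((harmonic (n + 1) : ℝ) - Real.log (n + 1)) -
          ((harmonic ⌊a * n⌋₊ : ℝ) - Real.log ⌊a * n⌋₊)) +
          (Real.log (n + 1) - Real.log n) - Real.log ((⌊a * n⌋₊ : ℝ) / n)))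
      atTop (𝓝 (1 * ((eulerMascheroniConstant - eulerMascheroniConstant) + 0 - Real.log a))) :=
    tratio.mul (((t1.sub t2).add t3).sub t4)
  have hlim : (1 : ℝ) * ((eulerMascheroniConstant - eulerMascheroniConstant) + 0 - Real.log a)
      = -Real.log a := by ring
  rw [hlim] at key
  apply key.congr'
  filter_upwards [hfloor.eventually_ge_atTop 1, eventually_ge_atTop 1] with n hn1 hn2
  have hnn : (0 : ℝ) < n := by exact_mod_cast hn2
  have hfn : (0 : ℝ) < (⌊a * n⌋₊ : ℝ) := by exact_mod_cast hn1
  rw [Real.log_div hfn.ne' hnn.ne', H_eq_harmonic, H_eq_harmonic]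
  ring
end
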